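/- arXiv:2312.03491 — 7 statements merged into one kernel-verified Lean document; each statement's English description precedes it below -/
import Mathlib

section
/- (Proposition 1, backward Kolmogorov component, one-dimensional case.) For any constants b ∈ ℝ and σ > 0, the function Ψ(t,x) = (σ² + σ̄_t²)^{−1/2} · exp( −(x − ᾱ_t b)² / (2·α_t²·(σ² + σ̄_t²)) ) satisfies, for every t ∈ (0,1) and every x ∈ ℝ, the backward Kolmogorov equation ∂Ψ/∂t (t,x) = −f(t)·x·∂Ψ/∂x (t,x) − (1/2)·g(t)²·∂²Ψ/∂x² (t,x). (This verifies that Ψ_t^ε, defined up to a time-independent constant as the Gaussian N(ᾱ_t b, α_t²(σ² + σ̄_t²)), solves the first PDE of the Schrödinger-bridge system with linear drift f(t)x.) -/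
open Topology


/-- Scaling coefficient `α_t = exp(∫_0^t f)`. -/
noncomputable def alpha (f : ℝ → ℝ) (t : ℝ) : ℝ := Real.exp (∫ τ in (0:ℝ)..t, f τ)

/-- Reverse scaling coefficient `ᾱ_t = exp(-∫_t^1 f)`. -/
noncomputable def alphaBar (f : ℝ → ℝ) (t : ℝ) : ℝ := Real.exp (-∫ τ in t..(1:ℝ), f τ)

/-- Reverse accumulated variance `σ̄_t² = ∫_t^1 g²/α²`. -/
noncomputable def sigmaBarSq (f g : ℝ → ℝ) (t : ℝ) : ℝ :=
  ∫ τ in t..(1:ℝ), (g τ)^2 / (alpha f τ)^2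

/-- Proposition 1, backward Kolmogorov component (1-dimensional case):
`Ψ(t,x) = (σ² + σ̄_t²)^{-1/2} exp(-(x - ᾱ_t b)²/(2 α_t² (σ² + σ̄_t²)))` satisfies
`∂Ψ/∂t = -f(t) x ∂Ψ/∂x - (1/2) g(t)² ∂²Ψ/∂x² on `(0,1) × ℝ`. -/
theorem tractable_sb_backward_kolmogorov
    (f g : ℝ → ℝ)
    (hf : ContinuousOn f (Set.Icc 0 1)) (hg : ContinuousOn g (Set.Icc 0 1))
    (hgpos : ∀ t ∈ Set.Icc (0:ℝ) 1, 0 < g t)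
    (b σ : ℝ) (hσ : 0 < σ)
    (Ψ : ℝ → ℝ → ℝ)
    (hΨ : ∀ t x, Ψ t x =
      (Real.sqrt (σ^2 + sigmaBarSq f g t))⁻¹ *
        Real.exp (-(x - alphaBar f t * b)^2 /
          (2 * (alpha f t)^2 * (σ^2 + sigmaBarSq f g t)))) :
    ∀ t ∈ Set.Ioo (0:ℝ) 1, ∀ x : ℝ,
      deriv (fun s => Ψ s x) t =
        - f t * x * deriv (fun y => Ψ t y) x
          - (1/2) * (g t)^2 * deriv (deriv (fun y => Ψ t y)) x := by
  intro t ht x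
  obtain ⟨ht0, ht1⟩ := ht
  -- continuity / measurability facts about f at t
  have hfc : ContinuousAt f t := hf.continuousAt (Icc_mem_nhds ht0 ht1)
  have hfm : StronglyMeasurableAtFilter f (𝓝 t) :=
    (hf.mono Set.Ioo_subset_Icc_self).stronglyMeasurableAtFilter isOpen_Ioo t ⟨ht0, ht1⟩
  have hfint1 : IntervalIntegrable f MeasureTheory.volume 0 t := by
    apply ContinuousOn.intervalIntegrable
    apply hf.mono
    rw [Set.uIcc_of_le ht0.le]
    exact Set.Icc_subset_Icc le_rfl ht1.le
  have hfint2 : IntervalIntegrable f MeasureTheory.volume t 1 := by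
    apply ContinuousOn.intervalIntegrable
    apply hf.mono
    rw [Set.uIcc_of_le ht1.le]
    exact Set.Icc_subset_Icc ht0.le le_rfl
  -- derivative of alpha
  have hI : HasDerivAt (fun s => ∫ τ in (0:ℝ)..s, f τ) (f t) t :=
    intervalIntegral.integral_hasDerivAt_right hfint1 hfm hfc
  have hA : HasDerivAt (alpha f) (alpha f t * f t) t := by
    rw [show alpha f = fun s => Real.exp (∫ τ in (0:ℝ)..s, f τ) from rfl]
    simpa [alpha, mul_comm] using hI.exp
  -- derivative of alphaBar
  have hJ : HasDerivAt (fun s => ∫ τ in s..(1:ℝ), f τ) (-f t) t :=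
    intervalIntegral.integral_hasDerivAt_left hfint2 hfm hfc
  have hAb : HasDerivAt (alphaBar f) (alphaBar f t * f t) t := by
    rw [show alphaBar f = fun s => Real.exp (-∫ τ in s..(1:ℝ), f τ) from rfl]
    simpa [alphaBar, mul_comm] using hJ.neg.exp
  -- continuity of alpha on Icc 0 1, positivity
  have hApos : ∀ τ : ℝ, 0 < alpha f τ := fun τ => Real.exp_pos _
  have hf01 : MeasureTheory.IntegrableOn f (Set.uIcc (0:ℝ) 1) := by
    rw [Set.uIcc_of_le zero_le_one]
    exact hf.integrableOn_compact isCompact_Icc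
  have hIcont : ContinuousOn (fun s => ∫ τ in (0:ℝ)..s, f τ) (Set.Icc 0 1) := by
    have := intervalIntegral.continuousOn_primitive_interval hf01
    rwa [Set.uIcc_of_le zero_le_one] at this
  have hAcont : ContinuousOn (alpha f) (Set.Icc 0 1) :=
    Real.continuous_exp.comp_continuousOn hIcont
  -- the integrand of sigmaBarSq
  set h : ℝ → ℝ := fun τ => (g τ)^2 / (alpha f τ)^2 with hh_def
  have hhcont : ContinuousOn h (Set.Icc 0 1) :=
    (hg.pow 2).div (hAcont.pow 2) (fun τ _ => pow_ne_zero _ (hApos τ).ne')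
  have hhc : ContinuousAt h t := hhcont.continuousAt (Icc_mem_nhds ht0 ht1)
  have hhm : StronglyMeasurableAtFilter h (𝓝 t) :=
    (hhcont.mono Set.Ioo_subset_Icc_self).stronglyMeasurableAtFilter isOpen_Ioo t ⟨ht0, ht1⟩
  have hhint : IntervalIntegrable h MeasureTheory.volume t 1 := by
    apply ContinuousOn.intervalIntegrable
    apply hhcont.mono
    rw [Set.uIcc_of_le ht1.le]
    exact Set.Icc_subset_Icc ht0.le le_rfl
  have hW : HasDerivAt (sigmaBarSq f g) (-h t) t := by
    have := intervalIntegral.integral_hasDerivAt_left hhint hhm hhc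
    rw [show sigmaBarSq f g = fun s => ∫ τ in s..(1:ℝ), (g τ)^2 / (alpha f τ)^2 from rfl]
    simpa [sigmaBarSq, hh_def] using this
  -- positivity of the variance
  have hsbnn : 0 ≤ sigmaBarSq f g t := by
    apply intervalIntegral.integral_nonneg ht1.le
    intro u _
    exact div_nonneg (sq_nonneg _) (sq_nonneg _)
  have hVpos : 0 < σ^2 + sigmaBarSq f g t := by positivity
  have hVne : σ^2 + sigmaBarSq f g t ≠ 0 := hVpos.ne'
  have hSpos : 0 < Real.sqrt (σ^2 + sigmaBarSq f g t) := Real.sqrt_pos.mpr hVpos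
  have hSne : Real.sqrt (σ^2 + sigmaBarSq f g t) ≠ 0 := hSpos.ne'
  have hS2 : Real.sqrt (σ^2 + sigmaBarSq f g t) ^ 2 = σ^2 + sigmaBarSq f g t :=
    Real.sq_sqrt hVpos.le
  have hAne : alpha f t ≠ 0 := (hApos t).ne'
  -- spatial derivatives
  have hfunx : (fun y => Ψ t y) = fun y =>
      (Real.sqrt (σ^2 + sigmaBarSq f g t))⁻¹ *
        Real.exp (-(y - alphaBar f t * b)^2 /
          (2 * (alpha f t)^2 * (σ^2 + sigmaBarSq f g t))) := by
    funext y; exact hΨ t y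
  have hX : ∀ y : ℝ, HasDerivAt (fun y =>
      (Real.sqrt (σ^2 + sigmaBarSq f g t))⁻¹ *
        Real.exp (-(y - alphaBar f t * b)^2 /
          (2 * (alpha f t)^2 * (σ^2 + sigmaBarSq f g t))))
      ((Real.sqrt (σ^2 + sigmaBarSq f g t))⁻¹ *
        Real.exp (-(y - alphaBar f t * b)^2 /
          (2 * (alpha f t)^2 * (σ^2 + sigmaBarSq f g t))) *
        (-(2 * (y - alphaBar f t * b)) / (2 * (alpha f t)^2 * (σ^2 + sigmaBarSq f g t)))) y := by
    intro y
    have h1 : HasDerivAt (fun y : ℝ => -(y - alphaBar f t * b)^2 /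
        (2 * (alpha f t)^2 * (σ^2 + sigmaBarSq f g t)))
        (-(2 * (y - alphaBar f t * b)) / (2 * (alpha f t)^2 * (σ^2 + sigmaBarSq f g t))) y := by
      have := (((hasDerivAt_id y).sub_const (alphaBar f t * b)).pow 2).neg.div_const
        (2 * (alpha f t)^2 * (σ^2 + sigmaBarSq f g t))
      simpa [mul_comm] using this
    have := (h1.exp).const_mul (Real.sqrt (σ^2 + sigmaBarSq f g t))⁻¹
    exact this.congr_deriv (by ring)
  have hd1 : deriv (fun y => Ψ t y) = fun y =>
      (Real.sqrt (σ^2 + sigmaBarSq f g t))⁻¹ *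
        Real.exp (-(y - alphaBar f t * b)^2 /
          (2 * (alpha f t)^2 * (σ^2 + sigmaBarSq f g t))) *
        (-(2 * (y - alphaBar f t * b)) / (2 * (alpha f t)^2 * (σ^2 + sigmaBarSq f g t))) := by
    rw [hfunx]
    exact funext fun y => (hX y).deriv
  -- second spatial derivative
  have hL : HasDerivAt (fun y : ℝ =>
      -(2 * (y - alphaBar f t * b)) / (2 * (alpha f t)^2 * (σ^2 + sigmaBarSq f g t)))
      (-2 / (2 * (alpha f t)^2 * (σ^2 + sigmaBarSq f g t))) x := by
    have := (((hasDerivAt_id x).sub_const (alphaBar f t * b)).const_mul 2).neg.div_const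
      (2 * (alpha f t)^2 * (σ^2 + sigmaBarSq f g t))
    simpa using this
  have hXX : HasDerivAt (fun y =>
      (Real.sqrt (σ^2 + sigmaBarSq f g t))⁻¹ *
        Real.exp (-(y - alphaBar f t * b)^2 /
          (2 * (alpha f t)^2 * (σ^2 + sigmaBarSq f g t))) *
        (-(2 * (y - alphaBar f t * b)) / (2 * (alpha f t)^2 * (σ^2 + sigmaBarSq f g t))))
      (((Real.sqrt (σ^2 + sigmaBarSq f g t))⁻¹ *
        Real.exp (-(x - alphaBar f t * b)^2 /
          (2 * (alpha f t)^2 * (σ^2 + sigmaBarSq f g t))) *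
        (-(2 * (x - alphaBar f t * b)) / (2 * (alpha f t)^2 * (σ^2 + sigmaBarSq f g t)))) *
        (-(2 * (x - alphaBar f t * b)) / (2 * (alpha f t)^2 * (σ^2 + sigmaBarSq f g t))) +
       ((Real.sqrt (σ^2 + sigmaBarSq f g t))⁻¹ *
        Real.exp (-(x - alphaBar f t * b)^2 /
          (2 * (alpha f t)^2 * (σ^2 + sigmaBarSq f g t)))) *
        (-2 / (2 * (alpha f t)^2 * (σ^2 + sigmaBarSq f g t)))) x :=
    (hX x).mul hL
  -- time derivative
  have hfunt : (fun s => Ψ s x) = fun s =>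
      (Real.sqrt (σ^2 + sigmaBarSq f g s))⁻¹ *
        Real.exp (-(x - alphaBar f s * b)^2 /
          (2 * (alpha f s)^2 * (σ^2 + sigmaBarSq f g s))) := by
    funext s; exact hΨ s x
  have hVt : HasDerivAt (fun s => σ^2 + sigmaBarSq f g s) (-h t) t := hW.const_add (σ^2)
  have hSinv : HasDerivAt (fun s => (Real.sqrt (σ^2 + sigmaBarSq f g s))⁻¹)
      (-((-h t) / (2 * Real.sqrt (σ^2 + sigmaBarSq f g t))) /
        (Real.sqrt (σ^2 + sigmaBarSq f g t))^2) t :=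
    (hVt.sqrt hVne).inv hSne
  have hM : HasDerivAt (fun s => alphaBar f s * b) (alphaBar f t * f t * b) t :=
    hAb.mul_const b
  have hN : HasDerivAt (fun s => -(x - alphaBar f s * b)^2)
      (-((2:ℕ) * (x - alphaBar f t * b)^(2-1) * (0 - alphaBar f t * f t * b))) t :=
    (((hasDerivAt_const t x).sub hM).pow 2).neg
  have hD : HasDerivAt (fun s => 2 * (alpha f s)^2 * (σ^2 + sigmaBarSq f g s))
      ((2 * ((2:ℕ) * (alpha f t)^(2-1) * (alpha f t * f t))) * (σ^2 + sigmaBarSq f g t) +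
        (2 * (alpha f t)^2) * (-h t)) t :=
    ((hA.pow 2).const_mul 2).mul hVt
  have hDne : 2 * (alpha f t)^2 * (σ^2 + sigmaBarSq f g t) ≠ 0 := by positivity
  have hQ := (hN.div hD hDne).exp
  have hT : HasDerivAt (fun s => (Real.sqrt (σ^2 + sigmaBarSq f g s))⁻¹ *
      Real.exp (-(x - alphaBar f s * b)^2 / (2 * (alpha f s)^2 * (σ^2 + sigmaBarSq f g s)))) _ t :=
    hSinv.mul hQ
  -- assemble
  rw [hfunt, hT.deriv, hd1, hXX.deriv]
  simp only [Pi.div_apply]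
  rw [← hS2]
  have hgt : g t ^ 2 = h t * (alpha f t)^2 := by
    simp only [hh_def]
    rw [div_mul_cancel₀ _ (pow_ne_zero 2 hAne)]
  rw [hgt]
  field_simp
  rw [Real.sqrt_sq hSpos.le]
  ring
end

section
/- (Proposition 1, boundary-condition system.) Let σ_1 > 0, α_1 > 0, ε > 0 and x_0, x_1 ∈ ℝ^d. Define σ² = ε² + (√(σ_1⁴ + 4ε⁴) − σ_1²)/2, a = x_0 + (σ²/σ_1²)(x_0 − x_1/α_1), and b = x_1 + (σ²/σ_1²)(x_1 − α_1 x_0). Then σ² > 0 and the following three identities hold: (i) σ²(σ² + σ_1²)/(2σ² + σ_1²) = ε²; (ii) ((σ² + σ_1²)·a + σ²·b/α_1)/(2σ² + σ_1²) = x_0; (iii) (α_1 σ²·a + (σ² + σ_1²)·b)/(2σ² + σ_1²) = x_1. That is, (a, b, σ²) solves the system of boundary conditions Ψ̂_0 Ψ_0 = N(x_0, ε² I), Ψ̂_1 Ψ_1 = N(x_1, α_1² ε² I) for the tractable Schrödinger bridge between Gaussian-smoothed paired data. -/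
/-- Proposition 1, boundary-condition system: the coefficients
`σ² = ε² + (√(σ₁⁴ + 4ε⁴) − σ₁²)/2`,
`a = x₀ + (σ²/σ₁²)(x₀ − x₁/α₁)`,
`b = x₁ + (σ²/σ₁²)(x₁ − α₁ x₀)`
satisfy `σ² > 0` and the three boundary identities. -/
theorem tractable_sb_boundary_conditions
    (d : ℕ) (σ1 α1 ε : ℝ) (hσ1 : 0 < σ1) (hα1 : 0 < α1) (hε : 0 < ε)
    (x0 x1 : Fin d → ℝ)
    (σsq : ℝ) (hσsq : σsq = ε^2 + (Real.sqrt (σ1^4 + 4 * ε^4) - σ1^2) / 2)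
    (a : Fin d → ℝ) (ha : a = x0 + (σsq / σ1^2) • (x0 - α1⁻¹ • x1))
    (b : Fin d → ℝ) (hb : b = x1 + (σsq / σ1^2) • (x1 - α1 • x0)) :
    0 < σsq ∧
    σsq * (σsq + σ1^2) / (2 * σsq + σ1^2) = ε^2 ∧
    (2 * σsq + σ1^2)⁻¹ • ((σsq + σ1^2) • a + (σsq * α1⁻¹) • b) = x0 ∧
    (2 * σsq + σ1^2)⁻¹ • ((α1 * σsq) • a + (σsq + σ1^2) • b) = x1 := by
  have hR0 : (0:ℝ) ≤ σ1^4 + 4 * ε^4 := by positivity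
  have hRsq : Real.sqrt (σ1^4 + 4 * ε^4) ^ 2 = σ1^4 + 4 * ε^4 := Real.sq_sqrt hR0
  have hRge : σ1^2 ≤ Real.sqrt (σ1^4 + 4 * ε^4) := by
    rw [show σ1^2 = Real.sqrt ((σ1^2)^2) from (Real.sqrt_sq (by positivity)).symm]
    apply Real.sqrt_le_sqrt; nlinarith [pow_pos hε 4]
  have hσpos : 0 < σsq := by rw [hσsq]; nlinarith [pow_pos hε 2]
  have hden : 2 * σsq + σ1^2 ≠ 0 := by positivity
  have hσ1ne : σ1^2 ≠ 0 := by positivity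
  have hα1ne : α1 ≠ 0 := ne_of_gt hα1
  refine ⟨hσpos, ?_, ?_, ?_⟩
  · have key : σsq * (σsq + σ1^2) = ε^2 * (2 * σsq + σ1^2) := by
      rw [hσsq]; nlinarith [hRsq]
    rw [div_eq_iff hden]; linarith [key]
  · funext i
    simp only [ha, hb, Pi.smul_apply, Pi.add_apply, Pi.sub_apply, smul_eq_mul]
    field_simp
    ring
  · funext i
    simp only [ha, hb, Pi.smul_apply, Pi.add_apply, Pi.sub_apply, smul_eq_mul]
    field_simp
    ring
end

section
/- (Integral identity for the x_1 coefficient in the bridge ODE solution, equation (33) of the paper.) For 0 < t ≤ s < 1, ∫_s^t g(τ)²/(α_τ² σ_τ σ̄_τ³) dτ = (2/σ_1²)·( σ_t/σ̄_t − σ_s/σ̄_s ). -/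
open MeasureTheory intervalIntegral Set


/-- Accumulated variance `σ_t² = ∫_0^t g²/α²`. -/
noncomputable def sigmaSq (f g : ℝ → ℝ) (t : ℝ) : ℝ :=
  ∫ τ in (0:ℝ)..t, (g τ)^2 / (alpha f τ)^2

/-- Integral identity for the `x₁` coefficient in the bridge ODE solution (equation (33)):
`∫_s^t g²/(α² σ σ̄³) dτ = (2/σ₁²)(σ_t/σ̄_t − σ_s/σ̄_s)` for `0 < t ≤ s < 1`. -/
theorem bridge_ode_x1_integral_identity
    (f g : ℝ → ℝ)
    (hf : ContinuousOn f (Set.Icc 0 1)) (hg : ContinuousOn g (Set.Icc 0 1))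
    (hgpos : ∀ t ∈ Set.Icc (0:ℝ) 1, 0 < g t)
    (s t : ℝ) (ht : 0 < t) (hts : t ≤ s) (hs : s < 1) :
    (∫ τ in s..t, (g τ)^2 /
        ((alpha f τ)^2 * Real.sqrt (sigmaSq f g τ) * Real.sqrt (sigmaBarSq f g τ)^3))
      = (2 / sigmaSq f g 1) *
          (Real.sqrt (sigmaSq f g t) / Real.sqrt (sigmaBarSq f g t)
            - Real.sqrt (sigmaSq f g s) / Real.sqrt (sigmaBarSq f g s)) := by
  have huIcc : Set.uIcc (0:ℝ) 1 = Set.Icc 0 1 := Set.uIcc_of_le zero_le_one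
  set h : ℝ → ℝ := fun τ => (g τ)^2 / (alpha f τ)^2 with hh
  -- continuity of h on [0,1]
  have hhc : ContinuousOn h (Set.Icc 0 1) := by
    have hfi : MeasureTheory.IntegrableOn f (Set.uIcc (0:ℝ) 1) := by
      rw [huIcc]; exact hf.integrableOn_Icc
    have hαc : ContinuousOn (alpha f) (Set.Icc 0 1) := by
      have := intervalIntegral.continuousOn_primitive_interval (μ := volume) hfi
      rw [huIcc] at this
      exact Real.continuous_exp.comp_continuousOn this
    exact (hg.pow 2).div (hαc.pow 2) (fun x hx => (pow_pos (Real.exp_pos _) 2).ne')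
  have hhpos : ∀ τ ∈ Set.Icc (0:ℝ) 1, 0 < h τ := by
    intro τ hτ
    have h1 := hgpos τ hτ
    have h2 : (0:ℝ) < alpha f τ := Real.exp_pos _
    positivity
  have hhint : ∀ a b : ℝ, a ∈ Set.Icc (0:ℝ) 1 → b ∈ Set.Icc (0:ℝ) 1 →
      IntervalIntegrable h volume a b := by
    intro a b ha hb
    exact (hhc.mono (Set.uIcc_subset_Icc ha hb)).intervalIntegrable
  -- positivity of sigmaSq and sigmaBarSq
  have hsigpos : ∀ τ : ℝ, 0 < τ → τ ≤ 1 → 0 < sigmaSq f g τ := by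
    intro τ h0 h1
    exact intervalIntegral.intervalIntegral_pos_of_pos_on
      (hhint 0 τ (by norm_num) ⟨h0.le, h1⟩)
      (fun x hx => hhpos x ⟨hx.1.le, hx.2.le.trans h1⟩) h0
  have hbarpos : ∀ τ : ℝ, 0 ≤ τ → τ < 1 → 0 < sigmaBarSq f g τ := by
    intro τ h0 h1
    exact intervalIntegral.intervalIntegral_pos_of_pos_on
      (hhint τ 1 ⟨h0, h1.le⟩ (by norm_num))
      (fun x hx => hhpos x ⟨h0.trans hx.1.le, hx.2.le⟩) h1
  -- sum identity
  have hsum : ∀ τ ∈ Set.Icc (0:ℝ) 1, sigmaSq f g τ + sigmaBarSq f g τ = sigmaSq f g 1 := by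
    intro τ hτ
    exact intervalIntegral.integral_add_adjacent_intervals
      (hhint 0 τ (by norm_num) hτ) (hhint τ 1 hτ (by norm_num))
  have hσ1 : 0 < sigmaSq f g 1 := hsigpos 1 one_pos le_rfl
  -- the antiderivative
  set F : ℝ → ℝ := fun τ =>
    (2 / sigmaSq f g 1) * (Real.sqrt (sigmaSq f g τ) / Real.sqrt (sigmaBarSq f g τ)) with hF
  have hIccsub : Set.Icc t s ⊆ Set.Icc (0:ℝ) 1 :=
    Set.Icc_subset_Icc ht.le hs.le
  have key : ∀ τ ∈ Set.uIcc s t,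
      HasDerivAt F
        ((g τ)^2 /
          ((alpha f τ)^2 * Real.sqrt (sigmaSq f g τ) * Real.sqrt (sigmaBarSq f g τ)^3)) τ := by
    intro τ hτ
    rw [Set.uIcc_of_ge hts] at hτ
    have hτ0 : 0 < τ := lt_of_lt_of_le ht hτ.1
    have hτ1 : τ < 1 := lt_of_le_of_lt hτ.2 hs
    have hmemIcc : τ ∈ Set.Icc (0:ℝ) 1 := ⟨hτ0.le, hτ1.le⟩
    have hnhds : Set.Icc (0:ℝ) 1 ∈ nhds τ := Icc_mem_nhds hτ0 hτ1
    have hct : ContinuousAt h τ := hhc.continuousAt hnhds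
    have hmeas : StronglyMeasurableAtFilter h (nhds τ) volume :=
      ⟨Set.Icc 0 1, hnhds, hhc.aestronglyMeasurable measurableSet_Icc⟩
    have hA : HasDerivAt (sigmaSq f g) (h τ) τ :=
      intervalIntegral.integral_hasDerivAt_right (hhint 0 τ (by norm_num) hmemIcc) hmeas hct
    have hB : HasDerivAt (sigmaBarSq f g) (-(h τ)) τ :=
      intervalIntegral.integral_hasDerivAt_left (hhint τ 1 hmemIcc (by norm_num)) hmeas hct
    have hApos : 0 < sigmaSq f g τ := hsigpos τ hτ0 hτ1.le
    have hBpos : 0 < sigmaBarSq f g τ := hbarpos τ hτ0.le hτ1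
    have ha : 0 < Real.sqrt (sigmaSq f g τ) := Real.sqrt_pos.mpr hApos
    have hb : 0 < Real.sqrt (sigmaBarSq f g τ) := Real.sqrt_pos.mpr hBpos
    have hsa : HasDerivAt (fun x => Real.sqrt (sigmaSq f g x))
        (h τ / (2 * Real.sqrt (sigmaSq f g τ))) τ := hA.sqrt hApos.ne'
    have hsb : HasDerivAt (fun x => Real.sqrt (sigmaBarSq f g x))
        (-(h τ) / (2 * Real.sqrt (sigmaBarSq f g τ))) τ := hB.sqrt hBpos.ne'
    have hdiv := hsa.div hsb hb.ne'
    have := hdiv.const_mul (2 / sigmaSq f g 1)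
    convert this using 1
    · rfl
    · rfl
    · rfl
    have hsum' := hsum τ hmemIcc
    have hαpos : (0:ℝ) < alpha f τ := Real.exp_pos _
    set a := Real.sqrt (sigmaSq f g τ) with hadef
    set b := Real.sqrt (sigmaBarSq f g τ) with hbdef
    have ha2 : a ^ 2 = sigmaSq f g τ := Real.sq_sqrt hApos.le
    have hb2 : b ^ 2 = sigmaBarSq f g τ := Real.sq_sqrt hBpos.le
    simp only [hh]
    rw [← hsum', ← ha2, ← hb2]
    field_simp
    ring
  have hcontF : ContinuousOn (fun τ => (g τ)^2 /
      ((alpha f τ)^2 * Real.sqrt (sigmaSq f g τ) * Real.sqrt (sigmaBarSq f g τ)^3))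
      (Set.Icc t s) := by
    have hfi : MeasureTheory.IntegrableOn h (Set.uIcc (0:ℝ) 1) := by
      rw [huIcc]; exact hhc.integrableOn_Icc
    have hσc : ContinuousOn (sigmaSq f g) (Set.Icc 0 1) := by
      have := intervalIntegral.continuousOn_primitive_interval (μ := volume) hfi
      rwa [huIcc] at this
    have hsbc : ContinuousOn (sigmaBarSq f g) (Set.Icc 0 1) := by
      have := intervalIntegral.continuousOn_primitive_interval_left (μ := volume) hfi
      rwa [huIcc] at this
    have hαc : ContinuousOn (alpha f) (Set.Icc 0 1) := by
      have hfi2 : MeasureTheory.IntegrableOn f (Set.uIcc (0:ℝ) 1) := by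
        rw [huIcc]; exact hf.integrableOn_Icc
      have := intervalIntegral.continuousOn_primitive_interval (μ := volume) hfi2
      rw [huIcc] at this
      exact Real.continuous_exp.comp_continuousOn this
    apply ContinuousOn.div
    · exact ((hg.mono hIccsub).pow 2)
    · exact (((hαc.mono hIccsub).pow 2).mul
        (Real.continuous_sqrt.comp_continuousOn (hσc.mono hIccsub))).mul
        ((Real.continuous_sqrt.comp_continuousOn (hsbc.mono hIccsub)).pow 3)
    · intro x hx
      have hx0 : 0 < x := lt_of_lt_of_le ht hx.1
      have hx1 : x < 1 := lt_of_le_of_lt hx.2 hs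
      have h1 : 0 < Real.sqrt (sigmaSq f g x) := Real.sqrt_pos.mpr (hsigpos x hx0 hx1.le)
      have h2 : 0 < Real.sqrt (sigmaBarSq f g x) := Real.sqrt_pos.mpr (hbarpos x hx0.le hx1)
      have h3 : (0:ℝ) < alpha f x := Real.exp_pos _
      positivity
  have hint : IntervalIntegrable (fun τ => (g τ)^2 /
      ((alpha f τ)^2 * Real.sqrt (sigmaSq f g τ) * Real.sqrt (sigmaBarSq f g τ)^3))
      volume s t := by
    apply ContinuousOn.intervalIntegrable
    rwa [Set.uIcc_of_ge hts]
  rw [mul_sub]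
  exact intervalIntegral.integral_eq_sub_of_hasDerivAt key hint
end

section
/- (Integral identity for the predictor coefficient in the bridge ODE solution, equation (34) of the paper.) For 0 < t ≤ s < 1, ∫_s^t g(τ)²/(α_τ² σ_τ³ σ̄_τ) dτ = (2/σ_1²)·( σ̄_s/σ_s − σ̄_t/σ_t ). -/
open Set MeasureTheory intervalIntegral

private lemma bridge_aux_alg (H a b S1 : ℝ) (ha : 0 < a) (hb : 0 < b) (hS1 : 0 < S1)
    (hsum : a^2 + b^2 = S1) :
    -(2/S1) * ((-H/(2*b) * a - b * (H/(2*a)))/a^2) = H / (a^3*b) := by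
  field_simp
  linear_combination H * hsum

/-- Integral identity for the predictor coefficient in the bridge ODE solution (equation (34)):
`∫_s^t g²/(α² σ³ σ̄) dτ = (2/σ₁²)(σ̄_s/σ_s − σ̄_t/σ_t)` for `0 < t ≤ s < 1`. -/
theorem bridge_ode_predictor_integral_identity
    (f g : ℝ → ℝ)
    (hf : ContinuousOn f (Set.Icc 0 1)) (hg : ContinuousOn g (Set.Icc 0 1))
    (hgpos : ∀ t ∈ Set.Icc (0:ℝ) 1, 0 < g t)
    (s t : ℝ) (ht : 0 < t) (hts : t ≤ s) (hs : s < 1) :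
    (∫ τ in s..t, (g τ)^2 /
        ((alpha f τ)^2 * Real.sqrt (sigmaSq f g τ)^3 * Real.sqrt (sigmaBarSq f g τ)))
      = (2 / sigmaSq f g 1) *
          (Real.sqrt (sigmaBarSq f g s) / Real.sqrt (sigmaSq f g s)
            - Real.sqrt (sigmaBarSq f g t) / Real.sqrt (sigmaSq f g t)) := by
  set h : ℝ → ℝ := fun τ => (g τ)^2 / (alpha f τ)^2 with hh_def
  -- continuity of alpha on Icc 0 1
  have hfint : IntegrableOn f (Set.Icc 0 1) := hf.integrableOn_compact isCompact_Icc
  have hAc : ContinuousOn (alpha f) (Set.Icc 0 1) := by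
    have : ContinuousOn (fun x => ∫ τ in (0:ℝ)..x, f τ) (Set.Icc 0 1) := by
      have := continuousOn_primitive_interval (a := (0:ℝ)) (b := 1) (μ := volume)
        (f := f) (by rwa [uIcc_of_le zero_le_one])
      rwa [uIcc_of_le zero_le_one] at this
    exact Real.continuous_exp.comp_continuousOn this
  have hApos : ∀ τ, 0 < alpha f τ := fun τ => Real.exp_pos _
  have hhc : ContinuousOn h (Set.Icc 0 1) := by
    apply ContinuousOn.div (hg.pow 2) (hAc.pow 2)
    intro x hx
    exact pow_ne_zero 2 (hApos x).ne'
  have hhpos : ∀ τ ∈ Set.Icc (0:ℝ) 1, 0 < h τ := fun τ hτ =>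
    div_pos (pow_pos (hgpos τ hτ) 2) (pow_pos (hApos τ) 2)
  have hhint : ∀ a b : ℝ, a ∈ Set.Icc (0:ℝ) 1 → b ∈ Set.Icc (0:ℝ) 1 →
      IntervalIntegrable h volume a b := by
    intro a b ha hb
    exact (hhc.mono (uIcc_subset_Icc ha hb)).intervalIntegrable
  -- sum identity
  have hsum : ∀ τ ∈ Set.Icc (0:ℝ) 1, sigmaSq f g τ + sigmaBarSq f g τ = sigmaSq f g 1 := by
    intro τ hτ
    exact integral_add_adjacent_intervals
      (hhint 0 τ (by simp) hτ) (hhint τ 1 hτ (by simp))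
  -- positivity of sigmaSq, sigmaBarSq on Ioo
  have hSpos : ∀ τ ∈ Set.Ioo (0:ℝ) 1, 0 < sigmaSq f g τ := by
    intro τ hτ
    apply intervalIntegral_pos_of_pos_on (hhint 0 τ (by simp) ⟨hτ.1.le, hτ.2.le⟩)
    · intro x hx; exact hhpos x ⟨hx.1.le, hx.2.le.trans hτ.2.le⟩
    · exact hτ.1
  have hBpos : ∀ τ ∈ Set.Ioo (0:ℝ) 1, 0 < sigmaBarSq f g τ := by
    intro τ hτ
    apply intervalIntegral_pos_of_pos_on (hhint τ 1 ⟨hτ.1.le, hτ.2.le⟩ (by simp))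
    · intro x hx; exact hhpos x ⟨hτ.1.le.trans hx.1.le, hx.2.le⟩
    · exact hτ.2
  have hS1pos : 0 < sigmaSq f g 1 := by
    apply intervalIntegral_pos_of_pos_on (hhint 0 1 (by simp) (by simp))
    · intro x hx; exact hhpos x ⟨hx.1.le, hx.2.le⟩
    · exact zero_lt_one
  -- derivatives
  have hmemIoo : ∀ τ ∈ Set.uIcc t s, τ ∈ Set.Ioo (0:ℝ) 1 := by
    intro τ hτ
    rw [uIcc_of_le hts] at hτ
    exact ⟨lt_of_lt_of_le ht hτ.1, lt_of_le_of_lt hτ.2 hs⟩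
  have hcontAt : ∀ τ ∈ Set.Ioo (0:ℝ) 1, ContinuousAt h τ := by
    intro τ hτ
    exact hhc.continuousAt (Icc_mem_nhds hτ.1 hτ.2)
  have hmeas : ∀ τ ∈ Set.Ioo (0:ℝ) 1, StronglyMeasurableAtFilter h (nhds τ) (volume : Measure ℝ) := by
    intro τ hτ
    have := hhc.stronglyMeasurableAtFilter_nhdsWithin measurableSet_Icc τ
      (μ := (volume : Measure ℝ))
    rwa [nhdsWithin_eq_nhds.2 (Icc_mem_nhds hτ.1 hτ.2)] at this
  have hSder : ∀ τ ∈ Set.Ioo (0:ℝ) 1, HasDerivAt (sigmaSq f g) (h τ) τ := by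
    intro τ hτ
    exact integral_hasDerivAt_right (hhint 0 τ (by simp) ⟨hτ.1.le, hτ.2.le⟩)
      (hmeas τ hτ) (hcontAt τ hτ)
  have hBder : ∀ τ ∈ Set.Ioo (0:ℝ) 1, HasDerivAt (sigmaBarSq f g) (-h τ) τ := by
    intro τ hτ
    exact integral_hasDerivAt_left (hhint τ 1 ⟨hτ.1.le, hτ.2.le⟩ (by simp))
      (hmeas τ hτ) (hcontAt τ hτ)
  -- the antiderivative
  set F : ℝ → ℝ := fun τ =>
    -(2 / sigmaSq f g 1) * (Real.sqrt (sigmaBarSq f g τ) / Real.sqrt (sigmaSq f g τ)) with hF_def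
  have hFder : ∀ τ ∈ Set.uIcc t s,
      HasDerivAt F ((g τ)^2 /
        ((alpha f τ)^2 * Real.sqrt (sigmaSq f g τ)^3 * Real.sqrt (sigmaBarSq f g τ))) τ := by
    intro τ hτ
    have hτ' := hmemIoo τ hτ
    have hS := hSpos τ hτ'
    have hB := hBpos τ hτ'
    have hsS : 0 < Real.sqrt (sigmaSq f g τ) := Real.sqrt_pos.2 hS
    have hsB : 0 < Real.sqrt (sigmaBarSq f g τ) := Real.sqrt_pos.2 hB
    have hds : HasDerivAt (fun τ => Real.sqrt (sigmaSq f g τ))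
        (h τ / (2 * Real.sqrt (sigmaSq f g τ))) τ := (hSder τ hτ').sqrt hS.ne'
    have hdb : HasDerivAt (fun τ => Real.sqrt (sigmaBarSq f g τ))
        (-h τ / (2 * Real.sqrt (sigmaBarSq f g τ))) τ := (hBder τ hτ').sqrt hB.ne'
    have hdiv := hdb.div hds hsS.ne'
    have := hdiv.const_mul (-(2 / sigmaSq f g 1))
    refine this.congr_deriv ?_
    have hsq : Real.sqrt (sigmaSq f g τ) ^ 2 = sigmaSq f g τ := Real.sq_sqrt hS.le
    have hbq : Real.sqrt (sigmaBarSq f g τ) ^ 2 = sigmaBarSq f g τ := Real.sq_sqrt hB.le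
    have hsum' := hsum τ ⟨hτ'.1.le, hτ'.2.le⟩
    have key2 := bridge_aux_alg (h τ) (Real.sqrt (sigmaSq f g τ)) (Real.sqrt (sigmaBarSq f g τ))
      (sigmaSq f g 1) hsS hsB hS1pos (by rw [hsq, hbq]; exact hsum')
    rw [key2, hh_def]
    simp only [div_div, mul_assoc]
  -- integrability of the integrand
  have hintgr : IntervalIntegrable (fun τ => (g τ)^2 /
      ((alpha f τ)^2 * Real.sqrt (sigmaSq f g τ)^3 * Real.sqrt (sigmaBarSq f g τ)))
      volume t s := by
    have hsub : Set.uIcc t s ⊆ Set.Icc 0 1 := by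
      intro τ hτ; have := hmemIoo τ hτ; exact ⟨this.1.le, this.2.le⟩
    have hSc : ContinuousOn (sigmaSq f g) (Set.uIcc t s) :=
      fun τ hτ => ((hSder τ (hmemIoo τ hτ)).continuousAt).continuousWithinAt
    have hBc : ContinuousOn (sigmaBarSq f g) (Set.uIcc t s) :=
      fun τ hτ => ((hBder τ (hmemIoo τ hτ)).continuousAt).continuousWithinAt
    apply ContinuousOn.intervalIntegrable
    apply ContinuousOn.div ((hg.mono hsub).pow 2)
    · exact (((hAc.mono hsub).pow 2).mul
        ((Real.continuous_sqrt.comp_continuousOn hSc).pow 3)).mul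
        (Real.continuous_sqrt.comp_continuousOn hBc)
    · intro τ hτ
      have hτ' := hmemIoo τ hτ
      have h1 := pow_pos (hApos τ) 2
      have h2 := pow_pos (Real.sqrt_pos.2 (hSpos τ hτ')) 3
      have h3 := Real.sqrt_pos.2 (hBpos τ hτ')
      positivity
  have key := integral_eq_sub_of_hasDerivAt hFder hintgr
  rw [integral_symm, key]
  simp only [hF_def]
  ring
end

section
/- (Proposition 2, exact solution of the bridge ODE.) Let 0 < t ≤ s < 1, let x_1 ∈ ℝ^d, let X : [t,s] → ℝ^d be continuous (the data-prediction function τ ↦ x_θ(x_τ, τ)), and let y : [t,s] → ℝ^d be differentiable satisfying, for every τ ∈ [t,s], y'(τ) = f(τ)·y(τ) − g(τ)²·(y(τ) − ᾱ_τ x_1)/(2 α_τ² σ̄_τ²) + g(τ)²·(y(τ) − α_τ X(τ))/(2 α_τ² σ_τ²). Then y(t) = (α_t σ_t σ̄_t)/(α_s σ_s σ̄_s)·y(s) + (ᾱ_t σ_t²/σ_1²)·(1 − (σ_s σ̄_t)/(σ̄_s σ_t))·x_1 − (α_t σ_t σ̄_t/2)·∫_s^t g(τ)²/(α_τ² σ_τ³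 σ̄_τ)·X(τ) dτ. -/
/-- Accumulated standard deviation `σ_t`. -/
noncomputable def sigma' (f g : ℝ → ℝ) (t : ℝ) : ℝ := Real.sqrt (sigmaSq f g t)

/-- Reverse accumulated standard deviation `σ̄_t`. -/
noncomputable def sigmaBar (f g : ℝ → ℝ) (t : ℝ) : ℝ := Real.sqrt (sigmaBarSq f g t)

open Set MeasureTheory intervalIntegral

variable {f g : ℝ → ℝ}

lemma alpha_pos (f : ℝ → ℝ) (t : ℝ) : 0 < alpha f t := Real.exp_pos _

lemma f_intInt (hf : ContinuousOn f (Set.Icc 0 1)) {a b : ℝ}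
    (ha : a ∈ Icc (0:ℝ) 1) (hb : b ∈ Icc (0:ℝ) 1) :
    IntervalIntegrable f volume a b :=
  (hf.mono (uIcc_subset_Icc ha hb)).intervalIntegrable

lemma contOn_alpha (hf : ContinuousOn f (Set.Icc 0 1)) : ContinuousOn (alpha f) (Icc 0 1) := by
  have h1 : ContinuousOn (fun u => ∫ τ in (0:ℝ)..u, f τ) (Icc 0 1) := by
    have := intervalIntegral.continuousOn_primitive_interval (μ := volume) (a := (0:ℝ)) (b := 1)
      (f := f) (by rw [uIcc_of_le (by norm_num : (0:ℝ) ≤ 1)]; exact hf.integrableOn_Icc)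
    simpa [uIcc_of_le (by norm_num : (0:ℝ) ≤ 1)] using this
  exact Real.continuous_exp.comp_continuousOn h1

lemma contOn_G (hf : ContinuousOn f (Set.Icc 0 1)) (hg : ContinuousOn g (Set.Icc 0 1)) :
    ContinuousOn (fun τ => (g τ)^2 / (alpha f τ)^2) (Icc 0 1) :=
  (hg.pow 2).div ((contOn_alpha hf).pow 2) (fun τ _ => pow_ne_zero _ (alpha_pos f τ).ne')

lemma hasDerivAt_alpha (hf : ContinuousOn f (Set.Icc 0 1)) {τ : ℝ} (hτ : τ ∈ Ioo (0:ℝ) 1) :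
    HasDerivAt (alpha f) (alpha f τ * f τ) τ := by
  have hprim : HasDerivAt (fun u => ∫ x in (0:ℝ)..u, f x) (f τ) τ := by
    apply intervalIntegral.integral_hasDerivAt_right
      (f_intInt hf ⟨le_rfl, by norm_num⟩ ⟨hτ.1.le, hτ.2.le⟩)
    · exact (hf.mono Ioo_subset_Icc_self).stronglyMeasurableAtFilter isOpen_Ioo τ hτ
    · exact (hf.mono Ioo_subset_Icc_self).continuousAt (isOpen_Ioo.mem_nhds hτ)
  exact hprim.exp

lemma hasDerivAt_sigmaSq (hf : ContinuousOn f (Set.Icc 0 1)) (hg : ContinuousOn g (Set.Icc 0 1))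
    {τ : ℝ} (hτ : τ ∈ Ioo (0:ℝ) 1) :
    HasDerivAt (sigmaSq f g) ((g τ)^2 / (alpha f τ)^2) τ := by
  apply intervalIntegral.integral_hasDerivAt_right
    (((contOn_G hf hg).mono (uIcc_subset_Icc ⟨le_rfl, by norm_num⟩ ⟨hτ.1.le, hτ.2.le⟩)).intervalIntegrable)
  · exact ((contOn_G hf hg).mono Ioo_subset_Icc_self).stronglyMeasurableAtFilter isOpen_Ioo τ hτ
  · exact ((contOn_G hf hg).mono Ioo_subset_Icc_self).continuousAt (isOpen_Ioo.mem_nhds hτ)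

lemma sigma_split (hf : ContinuousOn f (Set.Icc 0 1)) (hg : ContinuousOn g (Set.Icc 0 1))
    {τ : ℝ} (hτ : τ ∈ Icc (0:ℝ) 1) :
    sigmaSq f g τ + sigmaBarSq f g τ = sigmaSq f g 1 := by
  apply intervalIntegral.integral_add_adjacent_intervals
  · exact ((contOn_G hf hg).mono (uIcc_subset_Icc ⟨le_rfl, by norm_num⟩ hτ)).intervalIntegrable
  · exact ((contOn_G hf hg).mono (uIcc_subset_Icc hτ ⟨by norm_num, le_rfl⟩)).intervalIntegrable

lemma hasDerivAt_sigmaBarSq (hf : ContinuousOn f (Set.Icc 0 1)) (hg : ContinuousOn g (Set.Icc 0 1))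
    {τ : ℝ} (hτ : τ ∈ Ioo (0:ℝ) 1) :
    HasDerivAt (sigmaBarSq f g) (-((g τ)^2 / (alpha f τ)^2)) τ := by
  have h : HasDerivAt (fun u => sigmaSq f g 1 - sigmaSq f g u) (0 - (g τ)^2 / (alpha f τ)^2) τ :=
    (hasDerivAt_const _ _).sub (hasDerivAt_sigmaSq hf hg hτ)
  rw [show (0 - (g τ)^2 / (alpha f τ)^2) = -((g τ)^2 / (alpha f τ)^2) by ring] at h
  apply h.congr_of_eventuallyEq
  filter_upwards [Icc_mem_nhds hτ.1 hτ.2] with u hu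
  have := sigma_split hf hg hu
  linarith

lemma sigmaSq_pos (hf : ContinuousOn f (Set.Icc 0 1)) (hg : ContinuousOn g (Set.Icc 0 1))
    (hgpos : ∀ t ∈ Set.Icc (0:ℝ) 1, 0 < g t) {τ : ℝ} (h0 : 0 < τ) (h1 : τ ≤ 1) :
    0 < sigmaSq f g τ := by
  apply intervalIntegral.intervalIntegral_pos_of_pos_on
    (((contOn_G hf hg).mono (uIcc_subset_Icc ⟨le_rfl, by norm_num⟩ ⟨h0.le, h1⟩)).intervalIntegrable)
    _ h0
  intro x hx
  exact div_pos (pow_pos (hgpos x ⟨hx.1.le, hx.2.le.trans h1⟩) 2) (pow_pos (alpha_pos f x) 2)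

lemma sigmaBarSq_pos (hf : ContinuousOn f (Set.Icc 0 1)) (hg : ContinuousOn g (Set.Icc 0 1))
    (hgpos : ∀ t ∈ Set.Icc (0:ℝ) 1, 0 < g t) {τ : ℝ} (h0 : 0 ≤ τ) (h1 : τ < 1) :
    0 < sigmaBarSq f g τ := by
  apply intervalIntegral.intervalIntegral_pos_of_pos_on
    (((contOn_G hf hg).mono (uIcc_subset_Icc ⟨h0, h1.le⟩ ⟨by norm_num, le_rfl⟩)).intervalIntegrable)
    _ h1
  intro x hx
  exact div_pos (pow_pos (hgpos x ⟨h0.trans hx.1.le, hx.2.le⟩) 2) (pow_pos (alpha_pos f x) 2)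

lemma sigma'_pos (hf : ContinuousOn f (Set.Icc 0 1)) (hg : ContinuousOn g (Set.Icc 0 1))
    (hgpos : ∀ t ∈ Set.Icc (0:ℝ) 1, 0 < g t) {τ : ℝ} (h0 : 0 < τ) (h1 : τ ≤ 1) :
    0 < sigma' f g τ := Real.sqrt_pos.2 (sigmaSq_pos hf hg hgpos h0 h1)

lemma sigmaBar_pos (hf : ContinuousOn f (Set.Icc 0 1)) (hg : ContinuousOn g (Set.Icc 0 1))
    (hgpos : ∀ t ∈ Set.Icc (0:ℝ) 1, 0 < g t) {τ : ℝ} (h0 : 0 ≤ τ) (h1 : τ < 1) :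
    0 < sigmaBar f g τ := Real.sqrt_pos.2 (sigmaBarSq_pos hf hg hgpos h0 h1)

lemma sq_sigma' (hf : ContinuousOn f (Set.Icc 0 1)) (hg : ContinuousOn g (Set.Icc 0 1))
    (hgpos : ∀ t ∈ Set.Icc (0:ℝ) 1, 0 < g t) {τ : ℝ} (h0 : 0 < τ) (h1 : τ ≤ 1) :
    (sigma' f g τ)^2 = sigmaSq f g τ :=
  Real.sq_sqrt (sigmaSq_pos hf hg hgpos h0 h1).le

lemma sq_sigmaBar (hf : ContinuousOn f (Set.Icc 0 1)) (hg : ContinuousOn g (Set.Icc 0 1))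
    (hgpos : ∀ t ∈ Set.Icc (0:ℝ) 1, 0 < g t) {τ : ℝ} (h0 : 0 ≤ τ) (h1 : τ < 1) :
    (sigmaBar f g τ)^2 = sigmaBarSq f g τ :=
  Real.sq_sqrt (sigmaBarSq_pos hf hg hgpos h0 h1).le

lemma hasDerivAt_sigma' (hf : ContinuousOn f (Set.Icc 0 1)) (hg : ContinuousOn g (Set.Icc 0 1))
    (hgpos : ∀ t ∈ Set.Icc (0:ℝ) 1, 0 < g t) {τ : ℝ} (hτ : τ ∈ Ioo (0:ℝ) 1) :
    HasDerivAt (sigma' f g) ((g τ)^2 / (alpha f τ)^2 / (2 * sigma' f g τ)) τ :=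
  (hasDerivAt_sigmaSq hf hg hτ).sqrt (sigmaSq_pos hf hg hgpos hτ.1 hτ.2.le).ne'

lemma hasDerivAt_sigmaBar (hf : ContinuousOn f (Set.Icc 0 1)) (hg : ContinuousOn g (Set.Icc 0 1))
    (hgpos : ∀ t ∈ Set.Icc (0:ℝ) 1, 0 < g t) {τ : ℝ} (hτ : τ ∈ Ioo (0:ℝ) 1) :
    HasDerivAt (sigmaBar f g) (-((g τ)^2 / (alpha f τ)^2) / (2 * sigmaBar f g τ)) τ :=
  (hasDerivAt_sigmaBarSq hf hg hτ).sqrt (sigmaBarSq_pos hf hg hgpos hτ.1.le hτ.2).ne'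

lemma alphaBar_eq (hf : ContinuousOn f (Set.Icc 0 1)) {τ : ℝ} (hτ : τ ∈ Icc (0:ℝ) 1) :
    alphaBar f τ = alpha f τ / alpha f 1 := by
  have hsplit : (∫ x in (0:ℝ)..τ, f x) + ∫ x in τ..(1:ℝ), f x = ∫ x in (0:ℝ)..(1:ℝ), f x :=
    intervalIntegral.integral_add_adjacent_intervals
      (f_intInt hf ⟨le_rfl, by norm_num⟩ hτ) (f_intInt hf hτ ⟨by norm_num, le_rfl⟩)
  rw [alphaBar, alpha, alpha, ← Real.exp_sub]
  congr 1
  linarith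

lemma contOn_sigma' (hf : ContinuousOn f (Set.Icc 0 1)) (hg : ContinuousOn g (Set.Icc 0 1)) :
    ContinuousOn (sigma' f g) (Icc 0 1) := by
  apply Real.continuous_sqrt.comp_continuousOn
  have := intervalIntegral.continuousOn_primitive_interval (μ := volume) (a := (0:ℝ)) (b := 1)
    (f := fun τ => (g τ)^2 / (alpha f τ)^2)
    (by rw [uIcc_of_le (by norm_num : (0:ℝ) ≤ 1)]; exact (contOn_G hf hg).integrableOn_Icc)
  exact (by simpa [uIcc_of_le (by norm_num : (0:ℝ) ≤ 1)] using this :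
    ContinuousOn (fun x => ∫ t in (0:ℝ)..x, g t ^ 2 / alpha f t ^ 2) (Icc 0 1))

lemma contOn_sigmaBar (hf : ContinuousOn f (Set.Icc 0 1)) (hg : ContinuousOn g (Set.Icc 0 1)) :
    ContinuousOn (sigmaBar f g) (Icc 0 1) := by
  apply Real.continuous_sqrt.comp_continuousOn
  apply ContinuousOn.congr (f := fun u => sigmaSq f g 1 - sigmaSq f g u)
  · apply ContinuousOn.sub continuousOn_const
    have := intervalIntegral.continuousOn_primitive_interval (μ := volume) (a := (0:ℝ)) (b := 1)
      (f := fun τ => (g τ)^2 / (alpha f τ)^2)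
      (by rw [uIcc_of_le (by norm_num : (0:ℝ) ≤ 1)]; exact (contOn_G hf hg).integrableOn_Icc)
    exact (by simpa [uIcc_of_le (by norm_num : (0:ℝ) ≤ 1)] using this :
      ContinuousOn (fun x => ∫ t in (0:ℝ)..x, g t ^ 2 / alpha f t ^ 2) (Icc 0 1))
  · intro u hu
    have := sigma_split hf hg hu
    show sigmaBarSq f g u = sigmaSq f g 1 - sigmaSq f g u
    linarith


set_option maxHeartbeats 1000000 in
/-- Proposition 2, exact solution of the bridge ODE: if `y` solves the bridge ODE
`y' = f y − g²(y − ᾱ x₁)/(2α²σ̄²) + g²(y − α X)/(2α²σ²)` on `[t,s]` with data-prediction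
function `X`, then
`y(t) = (α_t σ_t σ̄_t)/(α_s σ_s σ̄_s) y(s) + (ᾱ_t σ_t²/σ₁²)(1 − σ_s σ̄_t/(σ̄_s σ_t)) x₁
        − (α_t σ_t σ̄_t/2) ∫_s^t g²/(α² σ³ σ̄) X dτ`. -/
theorem bridge_ode_exact_solution
    (f g : ℝ → ℝ)
    (hf : ContinuousOn f (Set.Icc 0 1)) (hg : ContinuousOn g (Set.Icc 0 1))
    (hgpos : ∀ t ∈ Set.Icc (0:ℝ) 1, 0 < g t)
    (d : ℕ) (x1 : Fin d → ℝ)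
    (s t : ℝ) (ht : 0 < t) (hts : t ≤ s) (hs : s < 1)
    (X : ℝ → Fin d → ℝ) (hX : ContinuousOn X (Set.Icc t s))
    (y : ℝ → Fin d → ℝ)
    (hy : ∀ τ ∈ Set.Icc t s,
      HasDerivAt y
        (f τ • y τ
          - ((g τ)^2 / (2 * (alpha f τ)^2 * sigmaBarSq f g τ)) • (y τ - alphaBar f τ • x1)
          + ((g τ)^2 / (2 * (alpha f τ)^2 * sigmaSq f g τ)) • (y τ - alpha f τ • X τ)) τ) :
    y t = (alpha f t * sigma' f g t * sigmaBar f g t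
            / (alpha f s * sigma' f g s * sigmaBar f g s)) • y s
      + (alphaBar f t * sigmaSq f g t / sigmaSq f g 1
          * (1 - sigma' f g s * sigmaBar f g t / (sigmaBar f g s * sigma' f g t))) • x1
      - (alpha f t * sigma' f g t * sigmaBar f g t / 2) •
          (∫ τ in s..t,
            ((g τ)^2 / ((alpha f τ)^2 * (sigma' f g τ)^3 * sigmaBar f g τ)) • X τ) := by
  have hts01 : Icc t s ⊆ Ioo (0:ℝ) 1 :=
    fun τ hτ => ⟨lt_of_lt_of_le ht hτ.1, lt_of_le_of_lt hτ.2 hs⟩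
  have hIccsub : Icc t s ⊆ Icc (0:ℝ) 1 := fun τ hτ => ⟨(hts01 hτ).1.le, (hts01 hτ).2.le⟩
  have htmem : t ∈ Icc t s := ⟨le_rfl, hts⟩
  have hsmem : s ∈ Icc t s := ⟨hts, le_rfl⟩
  have ht01 := hts01 htmem
  have hs01 := hts01 hsmem
  have hposσ : ∀ τ ∈ Ioo (0:ℝ) 1, 0 < sigma' f g τ :=
    fun τ hτ => sigma'_pos hf hg hgpos hτ.1 hτ.2.le
  have hposσb : ∀ τ ∈ Ioo (0:ℝ) 1, 0 < sigmaBar f g τ :=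
    fun τ hτ => sigmaBar_pos hf hg hgpos hτ.1.le hτ.2
  have hL : 0 < sigmaSq f g 1 := sigmaSq_pos hf hg hgpos one_pos le_rfl
  set μ : ℝ → ℝ := fun τ => alpha f τ * sigma' f g τ * sigmaBar f g τ with hμdef
  have hμpos : ∀ τ ∈ Ioo (0:ℝ) 1, 0 < μ τ :=
    fun τ hτ => mul_pos (mul_pos (alpha_pos f τ) (hposσ τ hτ)) (hposσb τ hτ)
  set b1 : ℝ → ℝ := fun τ =>
    (g τ)^2 / (2 * alpha f 1 * (alpha f τ)^2 * sigma' f g τ * (sigmaBar f g τ)^3) with hb1def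
  set b2 : ℝ → ℝ := fun τ =>
    (g τ)^2 / ((alpha f τ)^2 * (sigma' f g τ)^3 * sigmaBar f g τ) with hb2def
  -- clamped version of X, continuous on all of ℝ
  set Xc : ℝ → Fin d → ℝ := fun u => X (min s (max t u)) with hXcdef
  have hXc_cont : Continuous Xc := hX.comp_continuous
    (continuous_const.min (continuous_const.max continuous_id))
    (fun u => ⟨le_min hts (le_max_left _ _), min_le_left _ _⟩)
  have hXc_eq : ∀ u ∈ Icc t s, Xc u = X u := fun u hu => by
    simp only [hXcdef]; rw [max_eq_right hu.1, min_eq_right hu.2]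
  -- continuity of b1 and b2 on Ioo 0 1
  have hcontA : ContinuousOn (alpha f) (Ioo 0 1) := (contOn_alpha hf).mono Ioo_subset_Icc_self
  have hcontσ : ContinuousOn (sigma' f g) (Ioo 0 1) := (contOn_sigma' hf hg).mono Ioo_subset_Icc_self
  have hcontσb : ContinuousOn (sigmaBar f g) (Ioo 0 1) := (contOn_sigmaBar hf hg).mono Ioo_subset_Icc_self
  have hcontg2 : ContinuousOn (fun τ => (g τ)^2) (Ioo 0 1) := (hg.mono Ioo_subset_Icc_self).pow 2
  have hcontb1 : ContinuousOn b1 (Ioo 0 1) := by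
    apply hcontg2.div (((continuousOn_const.mul (hcontA.pow 2)).mul hcontσ).mul (hcontσb.pow 3))
    intro τ hτ
    exact (mul_pos (mul_pos (mul_pos (mul_pos two_pos (alpha_pos f 1)) (pow_pos (alpha_pos f τ) 2))
      (hposσ τ hτ)) (pow_pos (hposσb τ hτ) 3)).ne'
  have hcontb2 : ContinuousOn b2 (Ioo 0 1) := by
    apply hcontg2.div (((hcontA.pow 2).mul (hcontσ.pow 3)).mul hcontσb)
    intro τ hτ
    exact (mul_pos (mul_pos (pow_pos (alpha_pos f τ) 2) (pow_pos (hposσ τ hτ) 3))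
      (hposσb τ hτ)).ne'
  have hcontb2X : ContinuousOn (fun x => b2 x • Xc x) (Ioo 0 1) :=
    hcontb2.smul hXc_cont.continuousOn
  -- derivative of μ
  have hμderiv : ∀ τ ∈ Icc t s, HasDerivAt μ
      ((alpha f τ * f τ * sigma' f g τ
          + alpha f τ * ((g τ)^2 / (alpha f τ)^2 / (2 * sigma' f g τ))) * sigmaBar f g τ
        + alpha f τ * sigma' f g τ * (-((g τ)^2 / (alpha f τ)^2) / (2 * sigmaBar f g τ))) τ := by
    intro τ hτ
    exact ((hasDerivAt_alpha hf (hts01 hτ)).mul (hasDerivAt_sigma' hf hg hgpos (hts01 hτ))).mul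
      (hasDerivAt_sigmaBar hf hg hgpos (hts01 hτ))
  set Dμ : ℝ → ℝ := fun τ =>
    (alpha f τ * f τ * sigma' f g τ
        + alpha f τ * ((g τ)^2 / (alpha f τ)^2 / (2 * sigma' f g τ))) * sigmaBar f g τ
      + alpha f τ * sigma' f g τ * (-((g τ)^2 / (alpha f τ)^2) / (2 * sigmaBar f g τ)) with hDμdef
  set F : ℝ → Fin d → ℝ := fun u =>
    (μ u)⁻¹ • y u - (∫ x in s..u, b1 x) • x1 + (2:ℝ)⁻¹ • (∫ x in s..u, b2 x • Xc x) with hFdef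
  have hFderiv0 : ∀ τ ∈ Icc t s, HasDerivAt F 0 τ := by
    intro τ hτ
    have hτ' := hts01 hτ
    have hA := alpha_pos f τ
    have hσ := hposσ τ hτ'
    have hσb := hposσb τ hτ'
    have hμτ := hμpos τ hτ'
    have hA1 := alpha_pos f 1
    have hinv : HasDerivAt (fun u => (μ u)⁻¹) (-(Dμ τ) / (μ τ)^2) τ :=
      (hμderiv τ hτ).inv hμτ.ne'
    have h1 := hinv.smul (hy τ hτ)
    have hI1d : HasDerivAt (fun u => ∫ x in s..u, b1 x) (b1 τ) τ := by
      apply intervalIntegral.integral_hasDerivAt_right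
        ((hcontb1.mono ((uIcc_subset_Icc hsmem hτ).trans hts01)).intervalIntegrable)
        (hcontb1.stronglyMeasurableAtFilter isOpen_Ioo τ hτ')
        (hcontb1.continuousAt (isOpen_Ioo.mem_nhds hτ'))
    have hI2d : HasDerivAt (fun u => ∫ x in s..u, b2 x • Xc x) (b2 τ • Xc τ) τ := by
      apply intervalIntegral.integral_hasDerivAt_right
        ((hcontb2X.mono ((uIcc_subset_Icc hsmem hτ).trans hts01)).intervalIntegrable)
        (hcontb2X.stronglyMeasurableAtFilter isOpen_Ioo τ hτ')
        (hcontb2X.continuousAt (isOpen_Ioo.mem_nhds hτ'))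
    have hFd := (h1.sub (hI1d.smul_const x1)).add (hI2d.const_smul (2:ℝ)⁻¹)
    rw [hXc_eq τ hτ] at hFd
    have hsq : (sigma' f g τ)^2 = sigmaSq f g τ := sq_sigma' hf hg hgpos hτ'.1 hτ'.2.le
    have hsqb : (sigmaBar f g τ)^2 = sigmaBarSq f g τ := sq_sigmaBar hf hg hgpos hτ'.1.le hτ'.2
    have hab : alphaBar f τ = alpha f τ / alpha f 1 := alphaBar_eq hf (hIccsub hτ)
    have e1 : -(Dμ τ) / (μ τ)^2
        + (μ τ)⁻¹ * (f τ - (g τ)^2 / (2 * (alpha f τ)^2 * sigmaBarSq f g τ)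
          + (g τ)^2 / (2 * (alpha f τ)^2 * sigmaSq f g τ)) = 0 := by
      rw [← hsq, ← hsqb]
      simp only [hμdef, hDμdef]
      field_simp [hA.ne', hσ.ne', hσb.ne']
      ring
    have e2 : (μ τ)⁻¹ * ((g τ)^2 / (2 * (alpha f τ)^2 * sigmaBarSq f g τ)) * alphaBar f τ
        - b1 τ = 0 := by
      rw [← hsqb, hab]
      simp only [hμdef, hb1def]
      field_simp [hA.ne', hσ.ne', hσb.ne', hA1.ne']
      ring
    have e3 : -((μ τ)⁻¹ * ((g τ)^2 / (2 * (alpha f τ)^2 * sigmaSq f g τ)) * alpha f τ)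
        + (2:ℝ)⁻¹ * b2 τ = 0 := by
      rw [← hsq]
      simp only [hμdef, hb2def]
      field_simp [hA.ne', hσ.ne', hσb.ne']
      ring
    have hkey : ((μ τ)⁻¹ • (f τ • y τ
          - ((g τ)^2 / (2 * (alpha f τ)^2 * sigmaBarSq f g τ)) • (y τ - alphaBar f τ • x1)
          + ((g τ)^2 / (2 * (alpha f τ)^2 * sigmaSq f g τ)) • (y τ - alpha f τ • X τ))
        + (-(Dμ τ) / (μ τ)^2) • y τ) - b1 τ • x1 + (2:ℝ)⁻¹ • (b2 τ • X τ)
        = (-(Dμ τ) / (μ τ)^2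
            + (μ τ)⁻¹ * (f τ - (g τ)^2 / (2 * (alpha f τ)^2 * sigmaBarSq f g τ)
              + (g τ)^2 / (2 * (alpha f τ)^2 * sigmaSq f g τ))) • y τ
          + ((μ τ)⁻¹ * ((g τ)^2 / (2 * (alpha f τ)^2 * sigmaBarSq f g τ)) * alphaBar f τ
              - b1 τ) • x1
          + (-((μ τ)⁻¹ * ((g τ)^2 / (2 * (alpha f τ)^2 * sigmaSq f g τ)) * alpha f τ)
              + (2:ℝ)⁻¹ * b2 τ) • X τ := by
      module
    rw [hkey, e1, e2, e3] at hFd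
    simp only [zero_smul, add_zero] at hFd
    exact hFd
  -- F is constant on [t,s]
  have hFconst := constant_of_has_deriv_right_zero (f := F) (a := t) (b := s)
    (fun τ hτ => (hFderiv0 τ hτ).continuousAt.continuousWithinAt)
    (fun τ hτ => (hFderiv0 τ ⟨hτ.1, hτ.2.le⟩).hasDerivWithinAt)
  have hFs := hFconst s hsmem
  have hFs' : (μ s)⁻¹ • y s = (μ t)⁻¹ • y t - (∫ x in s..t, b1 x) • x1
      + (2:ℝ)⁻¹ • (∫ x in s..t, b2 x • Xc x) := by
    rw [hFdef] at hFs
    simp only [intervalIntegral.integral_same, zero_smul, smul_zero, sub_zero, add_zero] at hFs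
    exact hFs
  have hμt := (hμpos t ht01).ne'
  have hyt : y t = μ t • ((μ s)⁻¹ • y s + (∫ x in s..t, b1 x) • x1
      - (2:ℝ)⁻¹ • (∫ x in s..t, b2 x • Xc x)) := by
    rw [hFs']
    rw [show (μ t)⁻¹ • y t - (∫ x in s..t, b1 x) • x1 + (2:ℝ)⁻¹ • (∫ x in s..t, b2 x • Xc x)
        + (∫ x in s..t, b1 x) • x1 - (2:ℝ)⁻¹ • (∫ x in s..t, b2 x • Xc x) = (μ t)⁻¹ • y t
      from by abel]
    rw [smul_inv_smul₀ hμt]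
  -- evaluate the x1 integral
  have hI1val : (∫ x in s..t, b1 x)
      = sigma' f g t / (alpha f 1 * sigmaSq f g 1 * sigmaBar f g t)
        - sigma' f g s / (alpha f 1 * sigmaSq f g 1 * sigmaBar f g s) := by
    apply intervalIntegral.integral_eq_sub_of_hasDerivAt
    · intro τ hτ
      rw [Set.uIcc_of_ge hts] at hτ
      have hτ' := hts01 hτ
      have hσ := hposσ τ hτ'
      have hσb := hposσb τ hτ'
      have hden : HasDerivAt (fun u => alpha f 1 * sigmaSq f g 1 * sigmaBar f g u)
          (alpha f 1 * sigmaSq f g 1 * (-((g τ)^2 / (alpha f τ)^2) / (2 * sigmaBar f g τ))) τ :=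
        (hasDerivAt_sigmaBar hf hg hgpos hτ').const_mul _
      have hdne : alpha f 1 * sigmaSq f g 1 * sigmaBar f g τ ≠ 0 :=
        (mul_pos (mul_pos (alpha_pos f 1) hL) hσb).ne'
      have h := (hasDerivAt_sigma' hf hg hgpos hτ').div hden hdne
      refine h.congr_deriv ?_
      have hsplitτ : (sigma' f g τ)^2 + (sigmaBar f g τ)^2 = sigmaSq f g 1 := by
        rw [sq_sigma' hf hg hgpos hτ'.1 hτ'.2.le, sq_sigmaBar hf hg hgpos hτ'.1.le hτ'.2]
        exact sigma_split hf hg (hIccsub hτ)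
      rw [← hsplitτ]
      simp only [hb1def]
      have hA := alpha_pos f τ
      have hA1 := alpha_pos f 1
      field_simp [hA.ne', hσ.ne', hσb.ne', hA1.ne']
      ring
    · exact ((hcontb1.mono ((uIcc_subset_Icc hsmem htmem).trans hts01)).intervalIntegrable)
  have hI2congr : (∫ x in s..t, b2 x • Xc x) = ∫ x in s..t, b2 x • X x :=
    intervalIntegral.integral_congr
      (fun u hu => by rw [hXc_eq u ((uIcc_subset_Icc hsmem htmem) hu)])
  -- final assembly
  have hAt := alpha_pos f t
  have hA1 := alpha_pos f 1
  have hσt := hposσ t ht01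
  have hσbt := hposσb t ht01
  have hσs := hposσ s hs01
  have hσbs := hposσb s hs01
  have hcoef1 : μ t * (μ s)⁻¹
      = alpha f t * sigma' f g t * sigmaBar f g t
        / (alpha f s * sigma' f g s * sigmaBar f g s) := by
    simp only [hμdef]; rw [div_eq_mul_inv]
  have hcoef2 : μ t * (sigma' f g t / (alpha f 1 * sigmaSq f g 1 * sigmaBar f g t)
        - sigma' f g s / (alpha f 1 * sigmaSq f g 1 * sigmaBar f g s))
      = alphaBar f t * sigmaSq f g t / sigmaSq f g 1
        * (1 - sigma' f g s * sigmaBar f g t / (sigmaBar f g s * sigma' f g t)) := by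
    rw [alphaBar_eq hf (hIccsub htmem), ← sq_sigma' hf hg hgpos ht01.1 ht01.2.le]
    simp only [hμdef]
    field_simp [hAt.ne', hA1.ne', hσt.ne', hσbt.ne', hσs.ne', hσbs.ne', hL.ne']
  have hcoef3 : μ t * (2:ℝ)⁻¹ = alpha f t * sigma' f g t * sigmaBar f g t / 2 := by
    simp only [hμdef]; rw [div_eq_mul_inv]
  calc y t = μ t • ((μ s)⁻¹ • y s + (∫ x in s..t, b1 x) • x1
      - (2:ℝ)⁻¹ • (∫ x in s..t, b2 x • Xc x)) := hyt
    _ = (μ t * (μ s)⁻¹) • y s + (μ t * (∫ x in s..t, b1 x)) • x1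
        - (μ t * (2:ℝ)⁻¹) • (∫ x in s..t, b2 x • Xc x) := by module
    _ = _ := by
        rw [hI2congr, hI1val, hcoef1, hcoef2, hcoef3]
end

section
/- (Proposition 2, first-order discretization of the bridge ODE.) Let 0 < t ≤ s < 1, let x_1, X_0 ∈ ℝ^d, and let y : [t,s] → ℝ^d be differentiable satisfying, for every τ ∈ [t,s], y'(τ) = f(τ)·y(τ) − g(τ)²·(y(τ) − ᾱ_τ x_1)/(2 α_τ² σ̄_τ²) + g(τ)²·(y(τ) − α_τ X_0)/(2 α_τ² σ_τ²) (i.e., the bridge ODE with the data prediction frozen at the constant value X_0). Then y(t) = (α_t σ_t σ̄_t)/(α_s σ_s σ̄_s)·y(s) + (α_t/σ_1²)·[ (σ̄_t² − (σ̄_s σ_t σ̄_t)/σ_s)·X_0 + (σ_t² − (σ_s σ_t σ̄_t)/σ̄_s)·(x_1/α_1) ]. -/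
/-- Proposition 2, first-order discretization of the bridge ODE: if `y` solves the bridge
ODE on `[t,s]` with the data prediction frozen at the constant value `X₀`, then
`y(t) = (α_t σ_t σ̄_t)/(α_s σ_s σ̄_s) y(s)
        + (α_t/σ₁²)[(σ̄_t² − σ̄_s σ_t σ̄_t/σ_s) X₀ + (σ_t² − σ_s σ_t σ̄_t/σ̄_s)(x₁/α₁)]`. -/
theorem bridge_ode_first_order_discretization
    (f g : ℝ → ℝ)
    (hf : ContinuousOn f (Set.Icc 0 1)) (hg : ContinuousOn g (Set.Icc 0 1))
    (hgpos : ∀ t ∈ Set.Icc (0:ℝ) 1, 0 < g t)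
    (d : ℕ) (x1 X0 : Fin d → ℝ)
    (s t : ℝ) (ht : 0 < t) (hts : t ≤ s) (hs : s < 1)
    (y : ℝ → Fin d → ℝ)
    (hy : ∀ τ ∈ Set.Icc t s,
      HasDerivAt y
        (f τ • y τ
          - ((g τ)^2 / (2 * (alpha f τ)^2 * sigmaBarSq f g τ)) • (y τ - alphaBar f τ • x1)
          + ((g τ)^2 / (2 * (alpha f τ)^2 * sigmaSq f g τ)) • (y τ - alpha f τ • X0)) τ) :
    y t = (alpha f t * sigma' f g t * sigmaBar f g t
            / (alpha f s * sigma' f g s * sigmaBar f g s)) • y s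
      + (alpha f t / sigmaSq f g 1) •
          ((sigmaBarSq f g t
              - sigmaBar f g s * sigma' f g t * sigmaBar f g t / sigma' f g s) • X0
            + (sigmaSq f g t
                - sigma' f g s * sigma' f g t * sigmaBar f g t / sigmaBar f g s) •
              ((alpha f 1)⁻¹ • x1)) := by
  -- basic positivity and membership facts
  have hsub : Set.Icc t s ⊆ Set.Ioo (0:ℝ) 1 := fun τ hτ =>
    ⟨lt_of_lt_of_le ht hτ.1, lt_of_le_of_lt hτ.2 hs⟩
  have hIooIcc : Set.Ioo (0:ℝ) 1 ⊆ Set.Icc 0 1 := Set.Ioo_subset_Icc_self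
  have hApos : ∀ τ : ℝ, 0 < alpha f τ := fun τ => Real.exp_pos _
  -- f is interval integrable on subintervals of [0,1]
  have hfint : ∀ a b : ℝ, a ∈ Set.Icc (0:ℝ) 1 → b ∈ Set.Icc (0:ℝ) 1 →
      IntervalIntegrable f MeasureTheory.volume a b := fun a b ha hb =>
    (hf.mono (Set.uIcc_subset_Icc ha hb)).intervalIntegrable
  -- alpha is continuous on [0,1]
  have hAcont : ContinuousOn (alpha f) (Set.Icc 0 1) := by
    have h1 : ContinuousOn (fun u => ∫ τ in (0:ℝ)..u, f τ) (Set.uIcc (0:ℝ) 1) :=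
      intervalIntegral.continuousOn_primitive_interval
        ((hf.mono (by rw [Set.uIcc_of_le (by norm_num : (0:ℝ) ≤ 1)])).integrableOn_compact
          isCompact_uIcc)
    rw [Set.uIcc_of_le (by norm_num : (0:ℝ) ≤ 1)] at h1
    exact Real.continuous_exp.comp_continuousOn h1
  -- the integrand q = g²/α²
  set q : ℝ → ℝ := fun τ => (g τ)^2 / (alpha f τ)^2 with hq_def
  have hqcont : ContinuousOn q (Set.Icc 0 1) :=
    (hg.pow 2).div (hAcont.pow 2) (fun τ _ => pow_ne_zero _ (ne_of_gt (hApos τ)))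
  have hqint : ∀ a b : ℝ, a ∈ Set.Icc (0:ℝ) 1 → b ∈ Set.Icc (0:ℝ) 1 →
      IntervalIntegrable q MeasureTheory.volume a b := fun a b ha hb =>
    (hqcont.mono (Set.uIcc_subset_Icc ha hb)).intervalIntegrable
  have hqpos : ∀ τ ∈ Set.Icc (0:ℝ) 1, 0 < q τ := fun τ hτ =>
    div_pos (pow_pos (hgpos τ hτ) 2) (pow_pos (hApos τ) 2)
  -- derivative of alpha
  have hA_deriv : ∀ τ ∈ Set.Ioo (0:ℝ) 1, HasDerivAt (alpha f) (alpha f τ * f τ) τ := by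
    intro τ hτ
    have hI : HasDerivAt (fun u => ∫ x in (0:ℝ)..u, f x) (f τ) τ :=
      intervalIntegral.integral_hasDerivAt_right
        (hfint 0 τ (by norm_num) (hIooIcc hτ))
        (ContinuousOn.stronglyMeasurableAtFilter isOpen_Ioo (hf.mono hIooIcc) τ hτ)
        ((hf.mono hIooIcc).continuousAt (Ioo_mem_nhds hτ.1 hτ.2))
    exact hI.exp
  -- derivative of sigmaSq
  have hU_deriv : ∀ τ ∈ Set.Ioo (0:ℝ) 1, HasDerivAt (sigmaSq f g) (q τ) τ := by
    intro τ hτ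
    exact intervalIntegral.integral_hasDerivAt_right
      (hqint 0 τ (by norm_num) (hIooIcc hτ))
      (ContinuousOn.stronglyMeasurableAtFilter isOpen_Ioo (hqcont.mono hIooIcc) τ hτ)
      ((hqcont.mono hIooIcc).continuousAt (Ioo_mem_nhds hτ.1 hτ.2))
  -- decomposition sigmaSq + sigmaBarSq = sigmaSq 1
  have hUV : ∀ τ ∈ Set.Icc (0:ℝ) 1, sigmaSq f g τ + sigmaBarSq f g τ = sigmaSq f g 1 := by
    intro τ hτ
    exact intervalIntegral.integral_add_adjacent_intervals
      (hqint 0 τ (by norm_num) hτ) (hqint τ 1 hτ (by norm_num))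
  -- derivative of sigmaBarSq
  have hV_deriv : ∀ τ ∈ Set.Ioo (0:ℝ) 1, HasDerivAt (sigmaBarSq f g) (-q τ) τ := by
    intro τ hτ
    have h1 : HasDerivAt (fun u => sigmaSq f g 1 - sigmaSq f g u) (-q τ) τ := by
      exact ((hasDerivAt_const τ (sigmaSq f g 1)).sub (hU_deriv τ hτ)).congr_deriv (by simp)
    refine h1.congr_of_eventuallyEq ?_
    filter_upwards [Ioo_mem_nhds hτ.1 hτ.2] with x hx
    have := hUV x (hIooIcc hx)
    linarith
  -- positivity of sigmaSq / sigmaBarSq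
  have hUpos : ∀ τ : ℝ, 0 < τ → τ ≤ 1 → 0 < sigmaSq f g τ := by
    intro τ h0 h1
    exact intervalIntegral.intervalIntegral_pos_of_pos_on
      (hqint 0 τ (by norm_num) ⟨h0.le, h1⟩)
      (fun x hx => hqpos x ⟨hx.1.le, le_trans hx.2.le h1⟩) h0
  have hVpos : ∀ τ : ℝ, 0 ≤ τ → τ < 1 → 0 < sigmaBarSq f g τ := by
    intro τ h0 h1
    exact intervalIntegral.intervalIntegral_pos_of_pos_on
      (hqint τ 1 ⟨h0, h1.le⟩ (by norm_num))
      (fun x hx => hqpos x ⟨le_trans h0 hx.1.le, hx.2.le⟩) h1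
  have hWpos : 0 < sigmaSq f g 1 := hUpos 1 one_pos le_rfl
  -- alphaBar in terms of alpha
  have hAB : ∀ τ ∈ Set.Icc (0:ℝ) 1, alphaBar f τ = alpha f τ / alpha f 1 := by
    intro τ hτ
    have h1 : (∫ x in (0:ℝ)..τ, f x) + ∫ x in τ..(1:ℝ), f x = ∫ x in (0:ℝ)..(1:ℝ), f x :=
      intervalIntegral.integral_add_adjacent_intervals
        (hfint 0 τ (by norm_num) hτ) (hfint τ 1 hτ (by norm_num))
    rw [alphaBar, alpha, alpha, ← Real.exp_sub]
    congr 1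
    linarith
  -- abbreviations
  set W := sigmaSq f g 1 with hW_def
  set A1 := alpha f 1 with hA1_def
  have hA1pos : 0 < A1 := hApos 1
  -- The conserved quantity
  set F : ℝ → Fin d → ℝ := fun τ =>
    (alpha f τ * sigma' f g τ * sigmaBar f g τ)⁻¹ • y τ
      - (sigma' f g τ / sigmaBar f g τ / (A1 * W)) • x1
      - (sigmaBar f g τ / sigma' f g τ / W) • X0 with hF_def
  -- F has zero derivative on [t,s]
  have hF : ∀ τ ∈ Set.Icc t s, HasDerivAt F 0 τ := by
    intro τ hτ
    have hτIoo := hsub hτ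
    have hτIcc := hIooIcc hτIoo
    have hUτ : 0 < sigmaSq f g τ := hUpos τ hτIoo.1 hτIoo.2.le
    have hVτ : 0 < sigmaBarSq f g τ := hVpos τ hτIoo.1.le hτIoo.2
    have hSτ : 0 < sigma' f g τ := Real.sqrt_pos.2 hUτ
    have hTτ : 0 < sigmaBar f g τ := Real.sqrt_pos.2 hVτ
    have hS2 : sigma' f g τ ^ 2 = sigmaSq f g τ := Real.sq_sqrt hUτ.le
    have hT2 : sigmaBar f g τ ^ 2 = sigmaBarSq f g τ := Real.sq_sqrt hVτ.le
    have hA := hA_deriv τ hτIoo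
    have hS : HasDerivAt (sigma' f g) (q τ / (2 * sigma' f g τ)) τ :=
      (hU_deriv τ hτIoo).sqrt (ne_of_gt hUτ)
    have hT : HasDerivAt (sigmaBar f g) (-q τ / (2 * sigmaBar f g τ)) τ :=
      (hV_deriv τ hτIoo).sqrt (ne_of_gt hVτ)
    have hP : HasDerivAt (fun u => alpha f u * sigma' f g u * sigmaBar f g u)
        ((alpha f τ * f τ * sigma' f g τ + alpha f τ * (q τ / (2 * sigma' f g τ)))
            * sigmaBar f g τ
          + alpha f τ * sigma' f g τ * (-q τ / (2 * sigmaBar f g τ))) τ := by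
      exact (hA.mul hS).mul hT
    have hAne : alpha f τ ≠ 0 := ne_of_gt (hApos τ)
    have hSne : sigma' f g τ ≠ 0 := ne_of_gt hSτ
    have hTne : sigmaBar f g τ ≠ 0 := ne_of_gt hTτ
    have hA1ne : A1 ≠ 0 := ne_of_gt hA1pos
    have hPne : alpha f τ * sigma' f g τ * sigmaBar f g τ ≠ 0 :=
      mul_ne_zero (mul_ne_zero hAne hSne) hTne
    have h1 := (hP.inv hPne).smul (hy τ hτ)
    have h2 := (((hS.div hT (ne_of_gt hTτ)).div_const (A1 * W)).smul_const x1)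
    have h3 := (((hT.div hS (ne_of_gt hSτ)).div_const W).smul_const X0)
    have hD := (h1.sub h2).sub h3
    rw [hF_def]
    convert hD using 1
    case e'_4 => rfl
    case e'_5 => rfl
    case e'_6 => rfl
    case e'_8 => rfl
    have hWτ : W = sigma' f g τ ^ 2 + sigmaBar f g τ ^ 2 := by
      rw [hS2, hT2]; exact (hUV τ hτIcc).symm
    rw [hAB τ hτIcc, ← hS2, ← hT2, hWτ, Pi.inv_apply]
    match_scalars <;> (simp only [hq_def]; field_simp; ring)
  -- constancy of F
  have hFconst : F s = F t := by
    have hcont : ContinuousOn F (Set.Icc t s) := fun τ hτ =>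
      (hF τ hτ).continuousAt.continuousWithinAt
    exact constant_of_has_deriv_right_zero hcont
      (fun τ hτ => ((hF τ (Set.Ico_subset_Icc_self hτ)).hasDerivWithinAt)) s
      ⟨hts, le_rfl⟩
  -- positivity at the endpoints
  have hmem_t : t ∈ Set.Icc t s := ⟨le_rfl, hts⟩
  have hmem_s : s ∈ Set.Icc t s := ⟨hts, le_rfl⟩
  have hUt : 0 < sigmaSq f g t := hUpos t ht (le_trans hts hs.le)
  have hVt : 0 < sigmaBarSq f g t := hVpos t ht.le (lt_of_le_of_lt hts hs)
  have hUs : 0 < sigmaSq f g s := hUpos s (lt_of_lt_of_le ht hts) hs.le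
  have hVs : 0 < sigmaBarSq f g s := hVpos s (le_trans ht.le hts) hs
  have hSt : 0 < sigma' f g t := Real.sqrt_pos.2 hUt
  have hTt : 0 < sigmaBar f g t := Real.sqrt_pos.2 hVt
  have hSs : 0 < sigma' f g s := Real.sqrt_pos.2 hUs
  have hTs : 0 < sigmaBar f g s := Real.sqrt_pos.2 hVs
  have hS2t : sigma' f g t ^ 2 = sigmaSq f g t := Real.sq_sqrt hUt.le
  have hT2t : sigmaBar f g t ^ 2 = sigmaBarSq f g t := Real.sq_sqrt hVt.le
  -- solve for y t
  have hAtne : alpha f t ≠ 0 := ne_of_gt (hApos t)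
  have hAsne : alpha f s ≠ 0 := ne_of_gt (hApos s)
  have hStne : sigma' f g t ≠ 0 := ne_of_gt hSt
  have hTtne : sigmaBar f g t ≠ 0 := ne_of_gt hTt
  have hSsne : sigma' f g s ≠ 0 := ne_of_gt hSs
  have hTsne : sigmaBar f g s ≠ 0 := ne_of_gt hTs
  have hA1ne : A1 ≠ 0 := ne_of_gt hA1pos
  have hWne : W ≠ 0 := ne_of_gt hWpos
  have hyt : y t = (alpha f t * sigma' f g t * sigmaBar f g t) • F t
      + ((alpha f t * sigma' f g t * sigmaBar f g t)
          * (sigma' f g t / (sigmaBar f g t * (A1 * W)))) • x1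
      + ((alpha f t * sigma' f g t * sigmaBar f g t)
          * (sigmaBar f g t / (sigma' f g t * W))) • X0 := by
    rw [hF_def]
    match_scalars
    · field_simp
    · ring
    · ring
  rw [hyt, ← hFconst, hF_def]
  rw [show sigmaBarSq f g t = sigmaBar f g t ^ 2 from hT2t.symm,
      show sigmaSq f g t = sigma' f g t ^ 2 from hS2t.symm]
  match_scalars
  · field_simp
  · field_simp
    ring
  · field_simp
    ring
end

section
/- (The first-order bridge ODE update recovers the deterministic DDIM sampler in the limit σ_s/σ_1, σ_t/σ_1 → 0, Appendix B.2.) Fix α_t, α_s, α_1 > 0, reals 0 < σ_t < σ_s, and x_s, x_1, X ∈ ℝ^d. For σ_1 > σ_s define σ̄_t = √(σ_1² − σ_t²) and σ̄_s = √(σ_1² − σ_s²). Then, as σ_1 → ∞, the first-order bridge ODE update (α_t σ_t σ̄_t)/(α_s σ_s σ̄_s)·x_s + (α_t/σ_1²)·[ (σ̄_t² − (σ̄_s σ_t σ̄_t)/σ_s)·X + (σ_t² − (σ_s σ_t σ̄_t)/σ̄_s)·(x_1/α_1) ] converges to the DDIM update (α_t σ_t)/(α_s σ_s)·x_s + α_t·(1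 − σ_t/σ_s)·X. -/
open Filter Topology Real

private lemma sqrt_sub_div (a : ℝ) :
    Filter.Tendsto (fun x : ℝ => Real.sqrt (x^2 - a^2) / x) Filter.atTop (nhds 1) := by
  have h1 : Filter.Tendsto (fun x : ℝ => a^2 / x^2) Filter.atTop (nhds 0) := by
    apply Filter.Tendsto.div_atTop tendsto_const_nhds
    exact tendsto_pow_atTop two_ne_zero
  have h2 : Filter.Tendsto (fun x : ℝ => Real.sqrt (1 - a^2 / x^2)) Filter.atTop (nhds 1) := by
    have hsub := (tendsto_const_nhds (x := (1:ℝ))).sub h1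
    rw [sub_zero] at hsub
    simpa [Function.comp_def] using (Real.continuous_sqrt.tendsto 1).comp hsub
  refine h2.congr' ?_
  filter_upwards [eventually_ge_atTop (|a| + 1)] with x hx
  have hxpos : 0 < x := lt_of_lt_of_le (by positivity) hx
  have hx2 : a^2 ≤ x^2 := by nlinarith [sq_abs a, abs_nonneg a]
  have h : 1 - a^2/x^2 = (x^2 - a^2)/x^2 := by field_simp
  rw [h, Real.sqrt_div (by linarith), Real.sqrt_sq hxpos.le]

/-- The first-order bridge ODE update recovers the deterministic DDIM sampler in the limit
`σ_s/σ₁, σ_t/σ₁ → 0` (Appendix B.2): with `σ̄_t = √(σ₁² − σ_t²)` and `σ̄_s = √(σ₁² − σ_s²)`,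
as `σ₁ → ∞` the first-order bridge ODE update
`(α_t σ_t σ̄_t)/(α_s σ_s σ̄_s) x_s
  + (α_t/σ₁²)[(σ̄_t² − σ̄_s σ_t σ̄_t/σ_s) X + (σ_t² − σ_s σ_t σ̄_t/σ̄_s)(x₁/α₁)]`
converges to the DDIM update `(α_t σ_t)/(α_s σ_s) x_s + α_t (1 − σ_t/σ_s) X`. -/
theorem bridge_ode_update_tendsto_ddim
    (d : ℕ) (αt αs α1 σt σs : ℝ)
    (hαt : 0 < αt) (hαs : 0 < αs) (hα1 : 0 < α1)
    (hσt : 0 < σt) (hσts : σt < σs)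
    (xs x1 X : Fin d → ℝ) :
    Filter.Tendsto
      (fun σ1 : ℝ =>
        (αt * σt * Real.sqrt (σ1^2 - σt^2) / (αs * σs * Real.sqrt (σ1^2 - σs^2))) • xs
          + (αt / σ1^2) •
            (((σ1^2 - σt^2)
                - Real.sqrt (σ1^2 - σs^2) * σt * Real.sqrt (σ1^2 - σt^2) / σs) • X
              + (σt^2
                  - σs * σt * Real.sqrt (σ1^2 - σt^2) / Real.sqrt (σ1^2 - σs^2)) •
                (α1⁻¹ • x1)))
      Filter.atTop
      (nhds ((αt * σt / (αs * σs)) • xs + (αt * (1 - σt / σs)) • X)) := by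
  have hσs : 0 < σs := hσt.trans hσts
  have hr : Filter.Tendsto
      (fun σ1 : ℝ => Real.sqrt (σ1^2 - σt^2) / Real.sqrt (σ1^2 - σs^2))
      Filter.atTop (nhds 1) := by
    have h' : Filter.Tendsto
        (fun x : ℝ => (Real.sqrt (x^2 - σt^2) / x) / (Real.sqrt (x^2 - σs^2) / x))
        Filter.atTop (nhds 1) := by
      simpa [Pi.div_def] using (sqrt_sub_div σt).div (sqrt_sub_div σs) one_ne_zero
    refine h'.congr' ?_
    filter_upwards [eventually_ge_atTop (1:ℝ)] with x hx
    have hx0 : x ≠ 0 := by positivity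
    field_simp
  have hp : Filter.Tendsto
      (fun σ1 : ℝ => Real.sqrt (σ1^2 - σs^2) * Real.sqrt (σ1^2 - σt^2) / σ1^2)
      Filter.atTop (nhds 1) := by
    have h' : Filter.Tendsto
        (fun x : ℝ => (Real.sqrt (x^2 - σs^2) / x) * (Real.sqrt (x^2 - σt^2) / x))
        Filter.atTop (nhds 1) := by
      simpa using (sqrt_sub_div σs).mul (sqrt_sub_div σt)
    refine h'.congr' ?_
    filter_upwards [eventually_ge_atTop (1:ℝ)] with x hx
    have hx0 : x ≠ 0 := by positivity
    ring
  have hq : ∀ c : ℝ, Filter.Tendsto (fun σ1 : ℝ => c / σ1^2) Filter.atTop (nhds 0) :=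
    fun c => Filter.Tendsto.div_atTop tendsto_const_nhds (tendsto_pow_atTop two_ne_zero)
  have T1 : Filter.Tendsto
      (fun σ1 : ℝ => αt * σt * Real.sqrt (σ1^2 - σt^2) / (αs * σs * Real.sqrt (σ1^2 - σs^2)))
      Filter.atTop (nhds (αt * σt / (αs * σs))) := by
    have h' : Filter.Tendsto
        (fun x : ℝ => (αt * σt / (αs * σs)) *
          (Real.sqrt (x^2 - σt^2) / Real.sqrt (x^2 - σs^2)))
        Filter.atTop (nhds (αt * σt / (αs * σs))) := by
      simpa using (tendsto_const_nhds (x := αt * σt / (αs * σs))).mul hr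
    refine h'.congr' ?_
    filter_upwards [eventually_ge_atTop (σs + 1)] with x hx
    have h1 : (0:ℝ) < x^2 - σs^2 := by nlinarith
    have h2 : (0:ℝ) < Real.sqrt (x^2 - σs^2) := Real.sqrt_pos.mpr h1
    field_simp
  have T2 : Filter.Tendsto
      (fun σ1 : ℝ => (αt / σ1^2) *
        ((σ1^2 - σt^2) - Real.sqrt (σ1^2 - σs^2) * σt * Real.sqrt (σ1^2 - σt^2) / σs))
      Filter.atTop (nhds (αt * (1 - σt / σs))) := by
    have h := (tendsto_const_nhds (x := αt)).mul
      (((tendsto_const_nhds (x := (1:ℝ))).sub (hq (σt^2))).sub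
        ((tendsto_const_nhds (x := σt / σs)).mul hp))
    have h' : Filter.Tendsto
        (fun x : ℝ => αt * (1 - σt^2 / x^2 - σt / σs *
          (Real.sqrt (x^2 - σs^2) * Real.sqrt (x^2 - σt^2) / x^2)))
        Filter.atTop (nhds (αt * (1 - σt / σs))) := by
      convert h using 2
      ring
    refine h'.congr' ?_
    filter_upwards [eventually_ge_atTop (1:ℝ)] with x hx
    have hx0 : x ≠ 0 := by positivity
    field_simp
  have T3 : Filter.Tendsto
      (fun σ1 : ℝ => (αt / σ1^2) *
        (σt^2 - σs * σt * Real.sqrt (σ1^2 - σt^2) / Real.sqrt (σ1^2 - σs^2)))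
      Filter.atTop (nhds 0) := by
    have h := (tendsto_const_nhds (x := αt)).mul
      ((hq (σt^2)).sub ((hq (σs * σt)).mul hr))
    have h' : Filter.Tendsto
        (fun x : ℝ => αt * (σt^2 / x^2 - σs * σt / x^2 *
          (Real.sqrt (x^2 - σt^2) / Real.sqrt (x^2 - σs^2))))
        Filter.atTop (nhds 0) := by
      convert h using 2
      norm_num
    refine h'.congr' ?_
    filter_upwards [eventually_ge_atTop (1:ℝ)] with x hx
    have hx0 : x ≠ 0 := by positivity
    ring
  have key := ((T1.smul_const xs).add (T2.smul_const X)).add (T3.smul_const (α1⁻¹ • x1))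
  have key' : Filter.Tendsto
      (fun σ1 : ℝ =>
        (αt * σt * Real.sqrt (σ1^2 - σt^2) / (αs * σs * Real.sqrt (σ1^2 - σs^2))) • xs
          + ((αt / σ1^2) *
              ((σ1^2 - σt^2) - Real.sqrt (σ1^2 - σs^2) * σt * Real.sqrt (σ1^2 - σt^2) / σs)) • X
          + ((αt / σ1^2) *
              (σt^2 - σs * σt * Real.sqrt (σ1^2 - σt^2) / Real.sqrt (σ1^2 - σs^2))) •
            (α1⁻¹ • x1))
      Filter.atTop
      (nhds ((αt * σt / (αs * σs)) • xs + (αt * (1 - σt / σs)) • X)) := by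
    simpa using key
  refine key'.congr ?_
  intro x
  simp [smul_add, smul_smul, add_assoc, mul_assoc]
end
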